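/- arXiv:1911.06909 — 4 statements merged into one kernel-verified Lean document; each statement's English description precedes it below -/
import Mathlib

section
/- Let ν ∈ S^{n-1} be an irrational direction, ε > 0, and let H be the hyperplane {y ∈ ℝ^n : (y - x₀)·ν = 0} through a point x₀. Then for every z ∈ ℝ^n and every δ > 0, there exists w ∈ H and a lattice point k ∈ ℤ^n such that |z - w - εk| ≤ δ. -/
open scoped RealInnerProductSpace

/-- Lemma A.3 (c): a hyperplane with irrational normal direction is dense modulo the
lattice `ε·ℤ^n`. -/
theorem irrational_hyperplane_dense_mod_lattice (n : ℕ) (hn : 0 < n)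
    (ν : EuclideanSpace ℝ (Fin n)) (hν : ‖ν‖ = 1)
    (hirr : ¬ ∃ (t : ℝ) (z : Fin n → ℤ),
      ν = t • (show EuclideanSpace ℝ (Fin n) from WithLp.toLp 2 (fun i => (z i : ℝ))))
    (ε : ℝ) (hε : 0 < ε) (x₀ : EuclideanSpace ℝ (Fin n)) :
    ∀ (z : EuclideanSpace ℝ (Fin n)) (δ : ℝ), 0 < δ →
      ∃ (w : EuclideanSpace ℝ (Fin n)) (k : Fin n → ℤ),
        ⟪w - x₀, ν⟫ = 0 ∧
        ‖z - w - ε • (show EuclideanSpace ℝ (Fin n) from WithLp.toLp 2 (fun i => (k i : ℝ)))‖ ≤ δ := by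
  intro z δ hδ
  -- the subgroup of ℝ generated by the coordinates of ν
  set f : (Fin n → ℤ) →+ ℝ :=
    { toFun := fun k => ∑ i, (k i : ℝ) * ν i
      map_zero' := by simp
      map_add' := by
        intro a b
        simp [add_mul, Finset.sum_add_distrib] } with hf
  have hcoord : ∀ i, ν i ∈ f.range := by
    intro i
    refine ⟨Pi.single i 1, ?_⟩
    simp [hf, Pi.single_apply, Finset.sum_ite_eq']
  have hdense : Dense (f.range : Set ℝ) := by
    rcases AddSubgroup.dense_or_cyclic f.range with h | ⟨a, ha⟩
    · exact h
    · exfalso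
      apply hirr
      have hm : ∀ i, ∃ m : ℤ, (m : ℝ) * a = ν i := by
        intro i
        have := hcoord i
        rw [ha, AddSubgroup.mem_closure_singleton] at this
        obtain ⟨m, hm⟩ := this
        exact ⟨m, by simpa [zsmul_eq_mul] using hm⟩
      choose m hm using hm
      refine ⟨a, m, ?_⟩
      ext i
      have := hm i
      show ν i = a * (m i : ℝ)
      rw [← this]; ring
  -- find a lattice point approximating the inner product
  set c : ℝ := ⟪z - x₀, ν⟫ with hc
  have := Metric.dense_iff.mp hdense (c / ε) (δ / ε) (by positivity)
  obtain ⟨g, hg1, hg2⟩ := this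
  obtain ⟨k, hk⟩ := hg2
  refine ⟨z - ε • (show EuclideanSpace ℝ (Fin n) from WithLp.toLp 2 (fun i => (k i : ℝ)))
    - (c - ε * g) • ν, k, ?_, ?_⟩
  · have hkg : ⟪(show EuclideanSpace ℝ (Fin n) from WithLp.toLp 2 (fun i => (k i : ℝ))), ν⟫ = g := by
      rw [← hk]
      simp [hf, PiLp.inner_apply, RCLike.inner_apply, mul_comm]
    have hνν : ⟪ν, ν⟫ = 1 := by
      rw [real_inner_self_eq_norm_sq, hν]; norm_num
    have : (z - ε • (show EuclideanSpace ℝ (Fin n) from WithLp.toLp 2 (fun i => (k i : ℝ)))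
        - (c - ε * g) • ν) - x₀
        = (z - x₀) - ε • (show EuclideanSpace ℝ (Fin n) from WithLp.toLp 2 (fun i => (k i : ℝ)))
          - (c - ε * g) • ν := by abel
    rw [this]
    rw [inner_sub_left, inner_sub_left, inner_smul_left, inner_smul_left, hkg, hνν, ← hc]
    simp
    try ring
  · have : z - (z - ε • (show EuclideanSpace ℝ (Fin n) from WithLp.toLp 2 (fun i => (k i : ℝ)))
        - (c - ε * g) • ν)
        - ε • (show EuclideanSpace ℝ (Fin n) from WithLp.toLp 2 (fun i => (k i : ℝ)))
        = (c - ε * g) • ν := by abel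
    rw [this, norm_smul, hν, mul_one]
    have : dist g (c / ε) < δ / ε := by simpa [Metric.mem_ball] using hg1
    rw [Real.dist_eq] at this
    have h2 : |c - ε * g| < δ := by
      rw [abs_sub_comm]
      have he : ε * g - c = ε * (g - c / ε) := by field_simp
      rw [he, abs_mul, abs_of_pos hε]
      calc ε * |g - c / ε| < ε * (δ / ε) := mul_lt_mul_of_pos_left this hε
        _ = δ := by field_simp
    rw [Real.norm_eq_abs]
    linarith
end

section
/- Let ν ∈ S^{n-1} be an irrational direction with |ν_n| = max_j |ν_j|, let m satisfy (1,...,1,m)·ν = 0, and let ω_ν(N) = D_m(N) denote the discrepancy of (km)_k modulo 1. Then there exists a dimensional constant M > 0 such that: for any ε > 0, any point x₀, the hyperplane H_d = {y : (y-x₀)·ν = 0}, any x ∈ H_d, and any N ∈ ℕ with N ≥ 1, there exists y ∈ ℝ^n with |x - y| ≤ M·N·ε + ε·ω_ν(N), y ≡ x₀ (mod ε·ℤ^n), and dist(y, H_d) ≤ ε·ω_ν(N). -/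
open scoped RealInnerProductSpace Classical

/-- `A(E;N)` for `E = [a,b)`: the number of `1 ≤ k ≤ N` with `frac (k·x) ∈ [a,b)`. -/
noncomputable def countFract (x : ℝ) (N : ℕ) (a b : ℝ) : ℕ :=
  ((Finset.Icc 1 N).filter (fun k : ℕ => Int.fract ((k : ℝ) * x) ∈ Set.Ico a b)).card

/-- The discrepancy `D_x(N)` of the sequence `(k·x)` modulo 1. -/
noncomputable def discrepancy (x : ℝ) (N : ℕ) : ℝ :=
  sSup {r : ℝ | ∃ a b : ℝ, 0 ≤ a ∧ a ≤ b ∧ b ≤ 1 ∧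
    r = |(countFract x N a b : ℝ) / N - (b - a)|}

lemma disc_bdd (m : ℝ) (N : ℕ) : BddAbove {r : ℝ | ∃ a b : ℝ, 0 ≤ a ∧ a ≤ b ∧ b ≤ 1 ∧
    r = |(countFract m N a b : ℝ) / N - (b - a)|} := by
  refine ⟨2, ?_⟩
  rintro r ⟨a, b, ha, hab, hb1, rfl⟩
  have hc : (countFract m N a b : ℝ) / N ≤ 1 := by
    rcases Nat.eq_zero_or_pos N with h | h
    · subst h; simp [countFract]
    · rw [div_le_one (by positivity)]
      have := Finset.card_filter_le (Finset.Icc 1 N)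
        (fun k : ℕ => Int.fract ((k : ℝ) * m) ∈ Set.Ico a b)
      have h2 : (Finset.Icc 1 N).card = N := by simp
      exact_mod_cast (countFract m N a b).le_of_eq rfl |>.trans (h2 ▸ this)
  have hc0 : 0 ≤ (countFract m N a b : ℝ) / N := by positivity
  calc |(countFract m N a b : ℝ) / N - (b - a)| ≤ |(countFract m N a b : ℝ)/N| + |b - a| :=
        abs_sub _ _
    _ ≤ 1 + 1 := by
        gcongr
        · rw [abs_of_nonneg hc0]; exact hc
        · rw [abs_of_nonneg (by linarith)]; linarith
    _ = 2 := by norm_num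

lemma disc_nonneg (m : ℝ) (N : ℕ) : 0 ≤ discrepancy m N := by
  apply le_csSup (disc_bdd m N)
  refine ⟨0, 0, le_refl _, le_refl _, zero_le_one, ?_⟩
  have : countFract m N 0 0 = 0 := by simp [countFract, Set.Ico_self]
  rw [this]; simp

/-- Filling lemma: every real number is, modulo `1`, within `discrepancy m N` of
some `j * m` with `1 ≤ j ≤ N`. -/
lemma fill (m : ℝ) {N : ℕ} (hN : 1 ≤ N) (β : ℝ) :
    ∃ j ∈ Finset.Icc 1 N, ∃ z : ℤ, |(j : ℝ) * m + β - z| ≤ discrepancy m N := by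
  by_contra h
  push_neg at h
  set D := discrepancy m N with hD
  set α := Int.fract (-β) with hα
  have hα0 : 0 ≤ α := Int.fract_nonneg _
  have hα1 : α < 1 := Int.fract_lt_one _
  have hfar : ∀ j ∈ Finset.Icc 1 N, D < |Int.fract ((j : ℝ) * m) - α| := by
    intro j hj
    have := h j hj (⌊(j : ℝ) * m⌋ - ⌊-β⌋)
    have heq : (j : ℝ) * m + β - ((⌊(j : ℝ) * m⌋ - ⌊-β⌋ : ℤ) : ℝ)
        = Int.fract ((j : ℝ) * m) - α := by
      rw [hα]; unfold Int.fract; push_cast; ring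
    rwa [heq] at this
  have hne : (Finset.Icc 1 N).Nonempty := ⟨1, by simp [hN]⟩
  set D' := (Finset.Icc 1 N).inf' hne (fun j => |Int.fract ((j : ℝ) * m) - α|) with hD'
  have hDD' : D < D' := by
    rw [hD', Finset.lt_inf'_iff]
    exact hfar
  have hD'1 : D' < 1 := by
    have h1 : (1 : ℕ) ∈ Finset.Icc 1 N := by simp [hN]
    have hthis : D' ≤ |Int.fract (((1:ℕ) : ℝ) * m) - α| :=
      Finset.inf'_le (fun j : ℕ => |Int.fract ((j : ℝ) * m) - α|) h1
    calc D' ≤ |Int.fract (((1:ℕ) : ℝ) * m) - α| := hthis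
      _ < 1 := by
        rw [abs_lt]
        constructor <;>
          [linarith [Int.fract_lt_one (((1:ℕ):ℝ) * m), Int.fract_nonneg (((1:ℕ):ℝ) * m)];
           linarith [Int.fract_lt_one (((1:ℕ):ℝ) * m), Int.fract_nonneg (((1:ℕ):ℝ) * m)]]
  have hD0 : 0 ≤ D := disc_nonneg m N
  set E := (D + D') / 2 with hE
  have hDE : D < E := by rw [hE]; linarith
  have hED' : E < D' := by rw [hE]; linarith
  have hE1 : E < 1 := by linarith
  have hE0 : 0 < E := by linarith
  set a := max 0 (α - E) with ha
  set b := min 1 (α + E) with hb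
  have hcount : countFract m N a b = 0 := by
    rw [countFract, Finset.card_eq_zero, Finset.filter_eq_empty_iff]
    intro k hk hmem
    have h1 : Int.fract ((k : ℝ) * m) < b := hmem.2
    have h2 : a ≤ Int.fract ((k : ℝ) * m) := hmem.1
    have h3 : |Int.fract ((k : ℝ) * m) - α| ≤ E := by
      rw [abs_le]
      constructor
      · have : α - E ≤ a := le_max_right _ _
        linarith
      · have : b ≤ α + E := min_le_right _ _
        linarith
    have := hfar k hk
    have hle : D' ≤ |Int.fract ((k : ℝ) * m) - α| :=
      Finset.inf'_le (fun j : ℕ => |Int.fract ((j : ℝ) * m) - α|) hk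
    linarith
  have hmem : b - a ∈ {r : ℝ | ∃ a b : ℝ, 0 ≤ a ∧ a ≤ b ∧ b ≤ 1 ∧
      r = |(countFract m N a b : ℝ) / N - (b - a)|} := by
    refine ⟨a, b, le_max_left _ _, ?_, min_le_left _ _, ?_⟩
    · apply max_le
      · exact le_min zero_le_one (by linarith)
      · exact le_min (by linarith) (by linarith)
    · rw [hcount]
      have hab : a ≤ b := by
        apply max_le
        · exact le_min zero_le_one (by linarith)
        · exact le_min (by linarith) (by linarith)
      push_cast
      rw [zero_div, zero_sub, abs_neg, abs_of_nonneg (by linarith : (0:ℝ) ≤ b - a)]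
  have hle : b - a ≤ D := le_csSup (disc_bdd m N) hmem
  have : D < b - a := by
    rcases max_cases 0 (α - E) with ⟨h1, h2⟩ | ⟨h1, h2⟩ <;>
      rcases min_cases 1 (α + E) with ⟨h3, h4⟩ | ⟨h3, h4⟩ <;>
      rw [hb, ha, h1, h3] <;> linarith
  linarith

lemma alg_key (ε νi w m dlt S1 S2 S3 t j : ℝ)
    (f1 : m * νi + S1 = 0) (f2 : w * νi + S2 = 0) (f3 : dlt * νi = S3 - S2 / ε) :
    t * νi + (S3 + j * S1) = (t - (j * m + (w / ε - dlt))) * νi := by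
  linear_combination j * f1 + f2 / ε - f3

lemma norm_le_sum_abs {n : ℕ} (v : EuclideanSpace ℝ (Fin n)) : ‖v‖ ≤ ∑ i, |v i| := by
  rw [EuclideanSpace.norm_eq]
  have h1 : ∑ i, ‖v i‖^2 ≤ (∑ i, |v i|)^2 := by
    apply Finset.sum_sq_le_sq_sum_of_nonneg
    intro i _; positivity
  calc Real.sqrt (∑ i, ‖v i‖^2) ≤ Real.sqrt ((∑ i, |v i|)^2) := Real.sqrt_le_sqrt h1
    _ = ∑ i, |v i| := Real.sqrt_sq (by positivity)

set_option maxHeartbeats 1000000 in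
/-- Lemma A.3 (b): near-lattice points on hyperplanes with irrational normal. -/
theorem irrational_hyperplane_lattice_approx (n : ℕ) (hn : 0 < n)
    (ν : EuclideanSpace ℝ (Fin n)) (hν : ‖ν‖ = 1)
    (hirr : ¬ ∃ (t : ℝ) (z : Fin n → ℤ),
      ν = t • (show EuclideanSpace ℝ (Fin n) from WithLp.toLp 2 (fun i => (z i : ℝ))))
    (i₀ : Fin n) (hi₀ : (i₀ : ℕ) = n - 1)
    (hmax : ∀ j : Fin n, |ν j| ≤ |ν i₀|)
    (m : ℝ) (hm : ∑ i : Fin n, (if i = i₀ then m else 1) * ν i = 0)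
    (ω : ℕ → ℝ) (hω : ∀ N, ω N = discrepancy m N) :
    ∃ M : ℝ, 0 < M ∧
      ∀ (ε : ℝ), 0 < ε → ∀ (x₀ x : EuclideanSpace ℝ (Fin n)), ⟪x - x₀, ν⟫ = 0 →
        ∀ N : ℕ, 1 ≤ N →
          ∃ y : EuclideanSpace ℝ (Fin n),
            ‖x - y‖ ≤ M * N * ε + ε * ω N ∧
            (∃ k : Fin n → ℤ,
              y - x₀ = ε • (show EuclideanSpace ℝ (Fin n) from WithLp.toLp 2 (fun i => (k i : ℝ)))) ∧
            |⟪y - x₀, ν⟫| ≤ ε * ω N := by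
  classical
  have hnorm : ∑ i, (ν i)^2 = 1 := by
    rw [EuclideanSpace.norm_eq] at hν
    have h1 : ∑ i, ‖ν i‖^2 = 1 := Real.sqrt_eq_one.mp hν
    simpa [Real.norm_eq_abs, sq_abs] using h1
  have hνi₀ : ν i₀ ≠ 0 := by
    intro h0
    have hall : ∀ j, ν j = 0 := by
      intro j
      have := hmax j
      rw [h0, abs_zero] at this
      exact abs_eq_zero.mp (le_antisymm this (abs_nonneg _))
    rw [Finset.sum_eq_zero (fun i _ => by rw [hall i]; ring)] at hnorm
    norm_num at hnorm
  have hνpos : 0 < |ν i₀| := abs_pos.mpr hνi₀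
  have hν1 : |ν i₀| ≤ 1 := by
    have h1 : (ν i₀)^2 ≤ 1 := by
      calc (ν i₀)^2 ≤ ∑ i, (ν i)^2 :=
            Finset.single_le_sum (fun i _ => sq_nonneg (ν i)) (Finset.mem_univ i₀)
        _ = 1 := hnorm
    nlinarith [abs_nonneg (ν i₀), sq_abs (ν i₀)]
  have hcard : ((Finset.univ.erase i₀).card : ℝ) ≤ n := by
    have := Finset.card_le_card (Finset.erase_subset i₀ (Finset.univ : Finset (Fin n)))
    simp only [Finset.card_univ, Fintype.card_fin] at this
    exact_mod_cast this
  -- split hm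
  have f1 : m * ν i₀ + ∑ i ∈ Finset.univ.erase i₀, ν i = 0 := by
    rw [← Finset.add_sum_erase _ _ (Finset.mem_univ i₀)] at hm
    simp only [if_pos rfl] at hm
    rw [← hm]
    congr 1
    apply Finset.sum_congr rfl
    intro i hi
    rw [if_neg (Finset.mem_erase.mp hi).1, one_mul]
  -- |m| ≤ n
  have hmabs : |m| ≤ n := by
    have h1 : |m * ν i₀| = |∑ i ∈ Finset.univ.erase i₀, ν i| := by
      rw [show m * ν i₀ = -∑ i ∈ Finset.univ.erase i₀, ν i by linarith, abs_neg]
    have h2 : |∑ i ∈ Finset.univ.erase i₀, ν i| ≤ (n : ℝ) * |ν i₀| := by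
      calc |∑ i ∈ Finset.univ.erase i₀, ν i| ≤ ∑ i ∈ Finset.univ.erase i₀, |ν i| :=
            Finset.abs_sum_le_sum_abs _ _
        _ ≤ ∑ i ∈ Finset.univ.erase i₀, |ν i₀| := Finset.sum_le_sum (fun i _ => hmax i)
        _ = (Finset.univ.erase i₀).card * |ν i₀| := by rw [Finset.sum_const, nsmul_eq_mul]
        _ ≤ (n : ℝ) * |ν i₀| := mul_le_mul_of_nonneg_right hcard (abs_nonneg _)
    rw [abs_mul] at h1
    exact le_of_mul_le_mul_right (h1.le.trans h2) hνpos
  refine ⟨4 * n + 1, by positivity, ?_⟩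
  intro ε hε x₀ x hx N hN
  set D := discrepancy m N with hD
  have hD0 : 0 ≤ D := disc_nonneg m N
  have hN1 : (1 : ℝ) ≤ N := by exact_mod_cast hN
  -- orthogonality in coordinates
  have hw : ∑ i, (x i - x₀ i) * ν i = 0 := by
    rw [← hx, PiLp.inner_apply]
    apply Finset.sum_congr rfl
    intro i _
    simp [RCLike.inner_apply]
    try ring
  set z : Fin n → ℤ := fun i => ⌊(x i - x₀ i) / ε⌋ with hz
  set S1 : ℝ := ∑ i ∈ Finset.univ.erase i₀, ν i with hS1
  set S2 : ℝ := ∑ i ∈ Finset.univ.erase i₀, (x i - x₀ i) * ν i with hS2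
  set S3 : ℝ := ∑ i ∈ Finset.univ.erase i₀, (z i : ℝ) * ν i with hS3
  set δ : ℝ := (∑ i ∈ Finset.univ.erase i₀, ((z i : ℝ) - (x i - x₀ i) / ε) * ν i) / ν i₀
    with hδ
  have f2 : (x i₀ - x₀ i₀) * ν i₀ + S2 = 0 := by
    rw [hS2, ← hw, ← Finset.add_sum_erase Finset.univ (fun i => (x i - x₀ i) * ν i)
      (Finset.mem_univ i₀)]
  have f3 : δ * ν i₀ = S3 - S2 / ε := by
    rw [hδ, div_mul_cancel₀ _ hνi₀, hS3, hS2, Finset.sum_div, ← Finset.sum_sub_distrib]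
    apply Finset.sum_congr rfl
    intro i _
    ring
  -- bound on δ
  have hδabs : |δ| ≤ n := by
    have h1 : |∑ i ∈ Finset.univ.erase i₀, ((z i : ℝ) - (x i - x₀ i) / ε) * ν i|
        ≤ (n : ℝ) * |ν i₀| := by
      calc |∑ i ∈ Finset.univ.erase i₀, ((z i : ℝ) - (x i - x₀ i) / ε) * ν i|
          ≤ ∑ i ∈ Finset.univ.erase i₀, |((z i : ℝ) - (x i - x₀ i) / ε) * ν i| :=
            Finset.abs_sum_le_sum_abs _ _
        _ ≤ ∑ i ∈ Finset.univ.erase i₀, 1 * |ν i₀| := by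
            apply Finset.sum_le_sum
            intro i _
            rw [abs_mul]
            apply mul_le_mul _ (hmax i) (abs_nonneg _) zero_le_one
            rw [abs_le]
            constructor
            · have := Int.lt_floor_add_one ((x i - x₀ i) / ε)
              rw [hz]; push_cast; linarith
            · have := Int.floor_le ((x i - x₀ i) / ε)
              rw [hz]; push_cast; linarith
        _ = (Finset.univ.erase i₀).card * |ν i₀| := by rw [Finset.sum_const, nsmul_eq_mul]; ring_nf
        _ ≤ (n : ℝ) * |ν i₀| := mul_le_mul_of_nonneg_right hcard (abs_nonneg _)
    rw [hδ, abs_div]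
    rw [div_le_iff₀ hνpos]
    exact h1
  obtain ⟨j, hj, t, ht⟩ := fill m hN ((x i₀ - x₀ i₀) / ε - δ)
  obtain ⟨hj1, hjN⟩ := Finset.mem_Icc.mp hj
  have hjR : (j : ℝ) ≤ N := by exact_mod_cast hjN
  have hjR0 : (0 : ℝ) ≤ j := by positivity
  set k : Fin n → ℤ := fun i => if i = i₀ then t else z i + j with hk
  have hki₀ : k i₀ = t := by rw [hk]; simp
  -- the key decomposition of the inner-product sum
  have he : ∑ i ∈ Finset.univ.erase i₀, ((k i : ℝ)) * ν i = S3 + (j : ℝ) * S1 := by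
    rw [hS3, hS1, Finset.mul_sum, ← Finset.sum_add_distrib]
    apply Finset.sum_congr rfl
    intro i hi
    rw [hk]
    simp only [if_neg (Finset.mem_erase.mp hi).1]
    push_cast
    ring
  have hsum : ∑ i, (k i : ℝ) * ν i
      = ((t : ℝ) - ((j : ℝ) * m + ((x i₀ - x₀ i₀) / ε - δ))) * ν i₀ := by
    rw [← Finset.add_sum_erase Finset.univ (fun i => (k i : ℝ) * ν i) (Finset.mem_univ i₀), he]
    rw [hki₀]
    exact alg_key ε (ν i₀) (x i₀ - x₀ i₀) m δ S1 S2 S3 t j f1 f2 f3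
  -- bound |t - (j m + β)|
  have habs2 : |((j : ℝ) * m + ((x i₀ - x₀ i₀) / ε - δ)) - (t : ℝ)| ≤ D := by
    rw [hD]; exact ht
  have habs1 : |(t : ℝ) - ((j : ℝ) * m + ((x i₀ - x₀ i₀) / ε - δ))| ≤ D := by
    rw [abs_sub_comm]; exact habs2
  refine ⟨x₀ + ε • (show EuclideanSpace ℝ (Fin n) from WithLp.toLp 2 (fun i => (k i : ℝ))), ?_,
    ⟨k, add_sub_cancel_left x₀ _⟩, ?_⟩
  · -- norm bound
    set y : EuclideanSpace ℝ (Fin n) :=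
      x₀ + ε • (show EuclideanSpace ℝ (Fin n) from WithLp.toLp 2 (fun i => (k i : ℝ))) with hy
    have hxy : ∀ i, (x - y) i = (x i - x₀ i) - ε * (k i : ℝ) := by
      intro i
      rw [hy]
      show x i - (x₀ i + ε * (k i : ℝ)) = _
      ring
    have hbe : ∀ i ∈ Finset.univ.erase i₀, |(x - y) i| ≤ 2 * ε * N := by
      intro i hi
      rw [hxy i, hk]
      simp only [if_neg (Finset.mem_erase.mp hi).1]
      have h1 : (z i : ℝ) ≤ (x i - x₀ i) / ε := by
        simp only [hz]; exact Int.floor_le _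
      have h2 : (x i - x₀ i) / ε < (z i : ℝ) + 1 := by
        simp only [hz]; exact Int.lt_floor_add_one _
      have h3 : x i - x₀ i < ((z i : ℝ) + 1) * ε := (div_lt_iff₀ hε).mp h2
      have h4 : (z i : ℝ) * ε ≤ x i - x₀ i := (le_div_iff₀ hε).mp h1
      rw [abs_le]
      push_cast
      constructor
      · nlinarith
      · nlinarith
    have hbi₀ : |(x - y) i₀| ≤ ε * (2 * N * n + D) := by
      rw [hxy i₀, hki₀]
      have hfac : x i₀ - x₀ i₀ - ε * (t : ℝ)
          = ε * ((δ - (j:ℝ)*m) + (((j:ℝ)*m + ((x i₀ - x₀ i₀)/ε - δ)) - (t:ℝ))) := by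
        have hh : (δ - (j:ℝ)*m) + (((j:ℝ)*m + ((x i₀ - x₀ i₀)/ε - δ)) - (t:ℝ))
            = (x i₀ - x₀ i₀)/ε - (t:ℝ) := by ring
        rw [hh, mul_sub, mul_div_cancel₀ _ (ne_of_gt hε)]
      rw [hfac, abs_mul, abs_of_pos hε]
      have h6 : |(δ - (j:ℝ)*m) + (((j:ℝ)*m + ((x i₀ - x₀ i₀)/ε - δ)) - t)|
          ≤ |δ| + |(j:ℝ)*m| + D := by
        calc |(δ - (j:ℝ)*m) + (((j:ℝ)*m + ((x i₀ - x₀ i₀)/ε - δ)) - t)|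
            ≤ |δ - (j:ℝ)*m| + |((j:ℝ)*m + ((x i₀ - x₀ i₀)/ε - δ)) - t| := abs_add_le _ _
          _ ≤ (|δ| + |(j:ℝ)*m|) + D := add_le_add (abs_sub _ _) habs2
          _ = |δ| + |(j:ℝ)*m| + D := by ring
      have h7 : |(j:ℝ)*m| ≤ (N:ℝ) * n := by
        rw [abs_mul, abs_of_nonneg hjR0]
        apply mul_le_mul hjR hmabs (abs_nonneg _) (by positivity)
      have h8 : (n : ℝ) ≤ (N:ℝ) * n := by
        nlinarith [Nat.cast_nonneg (α := ℝ) n]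
      calc ε * |(δ - (j:ℝ)*m) + (((j:ℝ)*m + ((x i₀ - x₀ i₀)/ε - δ)) - t)|
          ≤ ε * (|δ| + |(j:ℝ)*m| + D) := by
            apply mul_le_mul_of_nonneg_left h6 hε.le
        _ ≤ ε * ((N:ℝ)*n + (N:ℝ)*n + D) := by
            apply mul_le_mul_of_nonneg_left _ hε.le
            gcongr
            exact hδabs.trans h8
        _ = ε * (2 * N * n + D) := by ring
    calc ‖x - y‖ ≤ ∑ i, |(x - y) i| := norm_le_sum_abs _
      _ = |(x - y) i₀| + ∑ i ∈ Finset.univ.erase i₀, |(x - y) i| :=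
          (Finset.add_sum_erase Finset.univ (fun i => |(x - y) i|) (Finset.mem_univ i₀)).symm
      _ ≤ ε * (2 * N * n + D) + (Finset.univ.erase i₀).card * (2 * ε * N) := by
          refine add_le_add hbi₀ ?_
          calc ∑ i ∈ Finset.univ.erase i₀, |(x - y) i|
                ≤ ∑ i ∈ Finset.univ.erase i₀, (2 * ε * N) := Finset.sum_le_sum hbe
              _ = (Finset.univ.erase i₀).card * (2 * ε * N) := by
                  rw [Finset.sum_const, nsmul_eq_mul]
      _ ≤ ε * (2 * N * n + D) + (n : ℝ) * (2 * ε * N) :=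
          add_le_add le_rfl (mul_le_mul_of_nonneg_right hcard (by positivity))
      _ ≤ (4 * n + 1) * N * ε + ε * ω N := by
          rw [hω, ← hD]
          nlinarith [Nat.cast_nonneg (α := ℝ) n, Nat.cast_nonneg (α := ℝ) N]
  · -- inner product bound
    have hsub : (x₀ + ε • (show EuclideanSpace ℝ (Fin n) from WithLp.toLp 2 (fun i => (k i : ℝ)))) - x₀
        = ε • (show EuclideanSpace ℝ (Fin n) from WithLp.toLp 2 (fun i => (k i : ℝ))) :=
      add_sub_cancel_left x₀ _
    rw [hsub, PiLp.inner_apply]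
    have hcomp : ∀ i : Fin n,
        (inner ℝ ((ε • (show EuclideanSpace ℝ (Fin n) from WithLp.toLp 2 (fun i => (k i : ℝ)))) i) (ν i) : ℝ)
        = ε * ((k i : ℝ) * ν i) := by
      intro i
      simp [RCLike.inner_apply]
      try ring
    rw [Finset.sum_congr rfl (fun i _ => hcomp i), ← Finset.mul_sum, hsum, hω, ← hD]
    rw [abs_mul, abs_mul, abs_of_pos hε]
    calc ε * (|(t : ℝ) - ((j : ℝ) * m + ((x i₀ - x₀ i₀) / ε - δ))| * |ν i₀|)
        ≤ ε * (D * 1) := by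
          apply mul_le_mul_of_nonneg_left _ hε.le
          exact mul_le_mul habs1 hν1 (abs_nonneg _) hD0
      _ = ε * D := by ring
end

section
/- Let m > 0, c ∈ (0,1), and suppose G : ℝ^n × ℝ^n → ℝ is differentiable in p with |∇_p G(p,x)| ≤ m and |∇_p G(p,x)·ν| ≤ c for a fixed unit vector ν. Let q₁, q₂ ∈ ℝ^n with q_i·ν = 0. If a function u₁ satisfies the boundary identity ν·∇u₁(x) = G(∇u₁(x), x) at a point x, then w₊ = u₁ + (q₂-q₁)·x + (m/(1-c))|q₁-q₂|·(x·ν) satisfies ν·∇w₊(x) ≥ G(∇w₊(x), x), and w₋ = u₁ + (q₂-q₁)·x - (m/(1-c))|q₁-q₂|·(x·ν) satisfies ν·∇w₋(x) ≤ G(∇w₋(x), x). -/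
open scoped RealInnerProductSpace

lemma mvt_inner_bound {n : ℕ} (G : EuclideanSpace ℝ (Fin n) → EuclideanSpace ℝ (Fin n) → ℝ)
    (g : EuclideanSpace ℝ (Fin n) → EuclideanSpace ℝ (Fin n) → EuclideanSpace ℝ (Fin n))
    (hg : ∀ p x, HasGradientAt (fun p' => G p' x) (g p x) p)
    (x p v : EuclideanSpace ℝ (Fin n)) (K : ℝ)
    (hK : ∀ q, |⟪g q x, v⟫| ≤ K) :
    |G (p + v) x - G p x| ≤ K := by
  set φ : ℝ → ℝ := fun t => G (p + t • v) x with hφ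
  have hder : ∀ t : ℝ, HasDerivAt φ ⟪g (p + t • v) x, v⟫ t := by
    intro t
    have hline : HasDerivAt (fun t : ℝ => p + t • v) v t := by
      simpa using ((hasDerivAt_id t).smul_const v).const_add p
    have := ((hg (p + t • v) x).hasFDerivAt).comp_hasDerivAt t hline
    simpa [InnerProductSpace.toDual_apply_apply, Function.comp_def, hφ] using this
  have h := norm_image_sub_le_of_norm_deriv_le_segment_01'
    (f := φ) (f' := fun t => ⟪g (p + t • v) x, v⟫) (C := K)
    (fun t _ => (hder t).hasDerivWithinAt)
    (fun t _ => by simpa using hK (p + t • v))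
  simpa [hφ] using h

/-- The algebraic heart of the Lipschitz-in-`q` estimate (Theorem 5.1): shifting a
solution of the oblique condition by `(q₂-q₁)·x ± (m/(1-c))|q₁-q₂|(x·ν)` produces a
super/subsolution of the boundary condition. -/
theorem oblique_lipschitz_in_q (n : ℕ) (m c : ℝ) (hm : 0 < m) (hc0 : 0 < c) (hc1 : c < 1)
    (ν : EuclideanSpace ℝ (Fin n)) (hν : ‖ν‖ = 1)
    (G : EuclideanSpace ℝ (Fin n) → EuclideanSpace ℝ (Fin n) → ℝ)
    (g : EuclideanSpace ℝ (Fin n) → EuclideanSpace ℝ (Fin n) → EuclideanSpace ℝ (Fin n))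
    (hg : ∀ p x, HasGradientAt (fun p' => G p' x) (g p x) p)
    (hgb : ∀ p x, ‖g p x‖ ≤ m)
    (hobl : ∀ p x, |⟪g p x, ν⟫| ≤ c)
    (q₁ q₂ : EuclideanSpace ℝ (Fin n)) (hq₁ : ⟪q₁, ν⟫ = 0) (hq₂ : ⟪q₂, ν⟫ = 0)
    (x Du₁ : EuclideanSpace ℝ (Fin n))
    (hbc : ⟪ν, Du₁⟫ = G Du₁ x) :
    ⟪ν, Du₁ + (q₂ - q₁) + ((m / (1 - c)) * ‖q₁ - q₂‖) • ν⟫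
        ≥ G (Du₁ + (q₂ - q₁) + ((m / (1 - c)) * ‖q₁ - q₂‖) • ν) x ∧
      ⟪ν, Du₁ + (q₂ - q₁) - ((m / (1 - c)) * ‖q₁ - q₂‖) • ν⟫
        ≤ G (Du₁ + (q₂ - q₁) - ((m / (1 - c)) * ‖q₁ - q₂‖) • ν) x := by
  have h1c : (0:ℝ) < 1 - c := by linarith
  set L : ℝ := (m / (1 - c)) * ‖q₁ - q₂‖ with hLdef
  have hL0 : 0 ≤ L := by positivity
  have hLeq : m * ‖q₁ - q₂‖ + c * L = L := by
    rw [hLdef]; field_simp; ring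
  have hqnorm : ‖q₂ - q₁‖ = ‖q₁ - q₂‖ := norm_sub_rev _ _
  -- the per-point bound on the directional derivative
  have key : ∀ (s : ℝ), |s| ≤ L → ∀ q, |⟪g q x, (q₂ - q₁) + s • ν⟫| ≤ L := by
    intro s hs q
    have h1 : |⟪g q x, q₂ - q₁⟫| ≤ m * ‖q₁ - q₂‖ := by
      calc |⟪g q x, q₂ - q₁⟫| ≤ ‖g q x‖ * ‖q₂ - q₁‖ := abs_real_inner_le_norm _ _
        _ ≤ m * ‖q₁ - q₂‖ := by
            rw [hqnorm]; exact mul_le_mul_of_nonneg_right (hgb q x) (norm_nonneg _)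
    have h2 : |s * ⟪g q x, ν⟫| ≤ L * c := by
      rw [abs_mul]
      exact mul_le_mul hs (hobl q x) (abs_nonneg _) hL0
    calc |⟪g q x, (q₂ - q₁) + s • ν⟫| = |⟪g q x, q₂ - q₁⟫ + s * ⟪g q x, ν⟫| := by
          rw [inner_add_right, real_inner_smul_right]
      _ ≤ |⟪g q x, q₂ - q₁⟫| + |s * ⟪g q x, ν⟫| := abs_add_le _ _
      _ ≤ m * ‖q₁ - q₂‖ + L * c := add_le_add h1 h2
      _ = L := by rw [mul_comm L c]; exact hLeq
  have habsL : |L| ≤ L := by rw [abs_of_nonneg hL0]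
  have habsL' : |(-L)| ≤ L := by rw [abs_neg, abs_of_nonneg hL0]
  have hplus := mvt_inner_bound G g hg x Du₁ ((q₂ - q₁) + L • ν) L (key L habsL)
  have hminus := mvt_inner_bound G g hg x Du₁ ((q₂ - q₁) + (-L) • ν) L (key (-L) habsL')
  have hνν : ⟪ν, ν⟫ = 1 := by
    have := real_inner_self_eq_norm_sq ν
    rw [hν] at this; simpa using this
  have hq₁' : ⟪ν, q₁⟫ = 0 := by rw [real_inner_comm]; exact hq₁
  have hq₂' : ⟪ν, q₂⟫ = 0 := by rw [real_inner_comm]; exact hq₂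
  have hip : ∀ s : ℝ, ⟪ν, Du₁ + ((q₂ - q₁) + s • ν)⟫ = G Du₁ x + s := by
    intro s
    rw [inner_add_right, inner_add_right, inner_sub_right, real_inner_smul_right,
      hq₁', hq₂', hνν, hbc]; ring
  have hEp : Du₁ + (q₂ - q₁) + L • ν = Du₁ + ((q₂ - q₁) + L • ν) := by abel
  have hEm : Du₁ + (q₂ - q₁) - L • ν = Du₁ + ((q₂ - q₁) + (-L) • ν) := by
    rw [neg_smul]; abel
  constructor
  · rw [hEp, hip L]
    have := abs_le.mp hplus
    linarith [this.1]
  · rw [hEm, hip (-L)]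
    have := abs_le.mp hminus
    linarith [(abs_le.mp hminus).2]
end

section
/- Fix constants n ≥ 2, Λ ≥ λ > 0, R > 0, and a unit vector ν = e_n. Define w : ℝ^n → ℝ by w(x) = (a + b)·(x_n + 1) + 2(|x'|² - (Λn/λ)(x_n² - 1))/R², where x = (x', x_n) and a, b ≥ 0. Then the Hessian D²w satisfies P⁺(D²w) ≥ 0 (i.e., w is a supersolution of the Pucci maximal equation), and on the boundary {x_n = 0} ∩ {|x| ≤ R}, the normal derivative satisfies ∂w/∂x_n ≥ a + |D_T w| whenever b ≥ 4/R, where D_T w = (∂w/∂x_1, ..., ∂w/∂x_{n-1}) is the tangential gradient. -/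
/-- The Pucci maximal operator `P⁺(M) = -Λ·tr(M₊) + λ·tr(M₋)`, defined via the
eigenvalues of the symmetric matrix `M`. -/
noncomputable def pucciPlus (lam Lam : ℝ) {n : ℕ} (M : Matrix (Fin n) (Fin n) ℝ) : ℝ :=
  if h : M.IsHermitian then
    -Lam * ∑ i, max (h.eigenvalues i) 0 + lam * ∑ i, max (-(h.eigenvalues i)) 0
  else 0

open EuclideanSpace in
lemma aux_hasFDerivAt (n : ℕ) (α : ℝ) (c : Fin n → ℝ) (C₀ : ℝ) (i₀ : Fin n)
    (x : EuclideanSpace ℝ (Fin n)) :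
    HasFDerivAt (fun x : EuclideanSpace ℝ (Fin n) =>
        α * x i₀ + (∑ k, c k * (x k) ^ 2) + C₀)
      (α • proj i₀ + ∑ k, (2 * c k * x k) • (proj (𝕜 := ℝ) k)) x := by
  have h1 : HasFDerivAt (fun x : EuclideanSpace ℝ (Fin n) => α * x i₀)
      (α • proj (𝕜 := ℝ) i₀) x :=
    ((proj (𝕜 := ℝ) i₀).hasFDerivAt (x := x)).const_mul α
  have h2 : ∀ k : Fin n, HasFDerivAt (fun x : EuclideanSpace ℝ (Fin n) => c k * (x k) ^ 2)
      ((2 * c k * x k) • (proj (𝕜 := ℝ) k)) x := by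
    intro k
    have hp := (proj (𝕜 := ℝ) k).hasFDerivAt (x := x)
    have := (hp.fun_mul hp).const_mul (c k)
    simp only [pow_two]
    refine this.congr_fderiv ?_
    ext v
    simp [ContinuousLinearMap.smul_apply]
    ring
  have hsum := HasFDerivAt.fun_sum (fun k (_ : k ∈ Finset.univ) => h2 k)
  exact (h1.add hsum).add_const C₀

lemma sum_eigenvalues_eq_trace' {m : Type*} [Fintype m] [DecidableEq m]
    {A : Matrix m m ℝ} (hA : A.IsHermitian) :
    ∑ i, hA.eigenvalues i = A.trace := by
  rw [hA.trace_eq_sum_eigenvalues]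
  simp

lemma pucci_diag_nonneg (n : ℕ) (lam Lam p q : ℝ)
    (hp : 0 < p) (hq : 0 < q) (i₀ : Fin n)
    (hLp : Lam * p * ((n : ℝ) - 1) ≤ lam * q) :
    0 ≤ pucciPlus lam Lam (Matrix.diagonal (fun i => if i = i₀ then -q else p)) := by
  classical
  set d : Fin n → ℝ := fun i => if i = i₀ then -q else p with hd
  have h : (Matrix.diagonal d).IsHermitian := Matrix.isHermitian_diagonal d
  rw [pucciPlus, dif_pos h]
  set ev := h.eigenvalues with hev
  have hmem : ∀ j, ev j = p ∨ ev j = -q := by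
    intro j
    have := h.eigenvalues_mem_spectrum_real j
    rw [spectrum_diagonal] at this
    obtain ⟨i, hi⟩ := this
    by_cases hii : i = i₀
    · right; rw [hev, ← hi, hd]; simp [hii]
    · left; rw [hev, ← hi, hd]; simp [hii]
  have htrd : (Matrix.diagonal d).trace = ((n : ℝ) - 1) * p - q := by
    rw [Matrix.trace_diagonal]
    rw [← Finset.add_sum_erase _ _ (Finset.mem_univ i₀)]
    have : ∀ i ∈ Finset.univ.erase i₀, d i = p := by
      intro i hi
      simp [hd, Finset.ne_of_mem_erase hi]
    rw [Finset.sum_congr rfl this, Finset.sum_const, Finset.card_erase_of_mem (Finset.mem_univ i₀)]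
    have hcard : (Finset.univ : Finset (Fin n)).card = n := by simp
    simp [hd, hcard, nsmul_eq_mul]
    cases n with
    | zero => exact absurd (Fin.pos i₀) (by simp)
    | succ m => push_cast [Nat.succ_sub_one]; ring
  have htr : ∑ j, ev j = ((n : ℝ) - 1) * p - q := by
    rw [hev, sum_eigenvalues_eq_trace' h, htrd]
  set S : Finset (Fin n) := Finset.univ.filter (fun j => ev j = p) with hS
  have hsplit : ∀ f : Fin n → ℝ, ∑ j, f j = ∑ j ∈ S, f j + ∑ j ∈ Sᶜ, f j := by
    intro f
    rw [Finset.sum_add_sum_compl]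
  have hSc : ∀ j ∈ Sᶜ, ev j = -q := by
    intro j hj
    rcases hmem j with h1 | h1
    · exfalso; rw [Finset.mem_compl, hS] at hj; simp [h1] at hj
    · exact h1
  have hSmem : ∀ j ∈ S, ev j = p := by
    intro j hj; rw [hS, Finset.mem_filter] at hj; exact hj.2
  set s := (S.card : ℝ)
  set m := ((Sᶜ).card : ℝ)
  have hsm : s + m = (n : ℝ) := by
    have h0 : S.card + (Sᶜ).card = n := by
      have := Finset.card_add_card_compl S
      simpa using this
    have := congrArg (Nat.cast : ℕ → ℝ) h0
    push_cast at this
    linarith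
  have hsum1 : ∑ j, max (ev j) 0 = p * s := by
    rw [hsplit]
    have e1 : ∑ j ∈ S, max (ev j) 0 = p * s := by
      rw [Finset.sum_congr rfl (fun j hj => by rw [hSmem j hj, max_eq_left hp.le])]
      simp [mul_comm]
      exact Or.inl rfl
    have e2 : ∑ j ∈ Sᶜ, max (ev j) 0 = 0 := by
      apply Finset.sum_eq_zero
      intro j hj
      rw [hSc j hj, max_eq_right (by linarith)]
    rw [e1, e2, add_zero]
  have hsum2 : ∑ j, max (-(ev j)) 0 = q * m := by
    rw [hsplit]
    have e1 : ∑ j ∈ S, max (-(ev j)) 0 = 0 := by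
      apply Finset.sum_eq_zero
      intro j hj
      rw [hSmem j hj, max_eq_right (by linarith)]
    have e2 : ∑ j ∈ Sᶜ, max (-(ev j)) 0 = q * m := by
      rw [Finset.sum_congr rfl (fun j hj => by rw [hSc j hj, neg_neg, max_eq_left hq.le])]
      simp [mul_comm]
      exact Or.inl rfl
    rw [e1, e2, zero_add]
  have htrs : p * s - q * m = ((n : ℝ) - 1) * p - q := by
    rw [← htr, hsplit]
    rw [Finset.sum_congr rfl hSmem, Finset.sum_congr rfl hSc]
    simp [mul_comm]
    ring
  have hs : s = (n : ℝ) - 1 := by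
    have hne : p + q ≠ 0 := by positivity
    have : (p + q) * s = (p + q) * ((n : ℝ) - 1) := by nlinarith [hsm, htrs]
    exact mul_left_cancel₀ hne this
  have hm : m = 1 := by rw [hs] at hsm; linarith
  rw [hsum1, hsum2, hs, hm]
  nlinarith [hLp]

set_option maxHeartbeats 2000000 in
/-- Barrier computation (Lemma 3.5): the explicit quadratic barrier `w` satisfies
`P⁺(D²w) ≥ 0`, and on `{x_n = 0} ∩ {|x| ≤ R}` its normal derivative dominates
`a + |D_T w|` as soon as `b ≥ 4/R`. -/
theorem barrier_computation (n : ℕ) (hn : 2 ≤ n) (lam Lam R a b : ℝ)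
    (hlam : 0 < lam) (hLam : lam ≤ Lam) (hR : 0 < R) (ha : 0 ≤ a) (hb : 0 ≤ b)
    (i₀ : Fin n) (hi₀ : (i₀ : ℕ) = n - 1)
    (w : EuclideanSpace ℝ (Fin n) → ℝ)
    (hw : ∀ x : EuclideanSpace ℝ (Fin n),
      w x = (a + b) * (x i₀ + 1) +
        2 * ((∑ i ∈ Finset.univ.erase i₀, (x i) ^ 2)
          - (Lam * n / lam) * ((x i₀) ^ 2 - 1)) / R ^ 2) :
    (∀ x : EuclideanSpace ℝ (Fin n),
      0 ≤ pucciPlus lam Lam (Matrix.of fun i j : Fin n =>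
        iteratedFDeriv ℝ 2 w x ![EuclideanSpace.single i 1, EuclideanSpace.single j 1])) ∧
    (b ≥ 4 / R → ∀ x : EuclideanSpace ℝ (Fin n), x i₀ = 0 → ‖x‖ ≤ R →
      fderiv ℝ w x (EuclideanSpace.single i₀ 1) ≥
        a + Real.sqrt (∑ i ∈ Finset.univ.erase i₀,
          (fderiv ℝ w x (EuclideanSpace.single i 1)) ^ 2)) := by
  classical
  have hLam0 : 0 < Lam := lt_of_lt_of_le hlam hLam
  have hR2 : (0:ℝ) < R ^ 2 := by positivity
  have hRne : R ≠ 0 := hR.ne'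
  have hn2 : (2:ℝ) ≤ (n:ℝ) := by exact_mod_cast hn
  set K : ℝ := Lam * n / lam with hK
  have hKpos : 0 < K := by
    apply div_pos _ hlam
    have : (0:ℝ) < (n:ℝ) := by linarith
    positivity
  set c : Fin n → ℝ := fun k => if k = i₀ then -(2 * K / R ^ 2) else 2 / R ^ 2 with hc
  set C₀ : ℝ := (a + b) + 2 * K / R ^ 2 with hC₀
  -- rewrite w in the canonical quadratic form
  have hwe : w = fun x : EuclideanSpace ℝ (Fin n) =>
      (a + b) * x i₀ + (∑ k, c k * (x k) ^ 2) + C₀ := by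
    funext x
    rw [hw x]
    have h1 : ∑ k, c k * (x k) ^ 2
        = -(2 * K / R ^ 2) * (x i₀) ^ 2 + ∑ k ∈ Finset.univ.erase i₀, (2 / R ^ 2) * (x k) ^ 2 := by
      rw [← Finset.add_sum_erase _ _ (Finset.mem_univ i₀)]
      congr 1
      · simp [hc]
      · exact Finset.sum_congr rfl fun k hk => by simp [hc, Finset.ne_of_mem_erase hk]
    rw [h1, ← Finset.mul_sum, hC₀]
    set S := ∑ i ∈ Finset.univ.erase i₀, (x i) ^ 2
    clear_value K
    field_simp
    ring
  subst hwe
  -- the derivative as a function of x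
  set B : EuclideanSpace ℝ (Fin n) →L[ℝ] (EuclideanSpace ℝ (Fin n) →L[ℝ] ℝ) :=
    ∑ k, (2 * c k) • ((EuclideanSpace.proj (𝕜 := ℝ) k).smulRight (EuclideanSpace.proj k)) with hB
  have hBapp : ∀ (u v : EuclideanSpace ℝ (Fin n)), B u v = ∑ k, 2 * c k * (u k * v k) := by
    intro u v
    rw [hB]
    simp only [ContinuousLinearMap.sum_apply, ContinuousLinearMap.smul_apply,
      ContinuousLinearMap.smulRight_apply, PiLp.proj_apply, smul_eq_mul]
    try exact Finset.sum_congr rfl fun k _ => by ring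
  have hgB : ∀ x : EuclideanSpace ℝ (Fin n),
      ((a + b) • EuclideanSpace.proj i₀ + ∑ k, (2 * c k * x k) • (EuclideanSpace.proj (𝕜 := ℝ) k))
        = (a + b) • EuclideanSpace.proj (𝕜 := ℝ) i₀ + B x := by
    intro x
    congr 1
    ext v
    rw [hBapp]
    simp only [ContinuousLinearMap.sum_apply, ContinuousLinearMap.smul_apply,
      PiLp.proj_apply, smul_eq_mul]
    try exact Finset.sum_congr rfl fun k _ => by ring
  have hfderiv : fderiv ℝ (fun x : EuclideanSpace ℝ (Fin n) =>
      (a + b) * x i₀ + (∑ k, c k * (x k) ^ 2) + C₀)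
      = fun x => (a + b) • EuclideanSpace.proj (𝕜 := ℝ) i₀ + B x := by
    funext x
    rw [(aux_hasFDerivAt n (a + b) c C₀ i₀ x).fderiv, hgB x]
  have hfd2 : ∀ x : EuclideanSpace ℝ (Fin n),
      fderiv ℝ (fderiv ℝ (fun x : EuclideanSpace ℝ (Fin n) =>
        (a + b) * x i₀ + (∑ k, c k * (x k) ^ 2) + C₀)) x = B := by
    intro x
    rw [hfderiv]
    exact (B.hasFDerivAt.const_add _).fderiv
  have hiFD : ∀ (x : EuclideanSpace ℝ (Fin n)) (i j : Fin n),
      iteratedFDeriv ℝ 2 (fun x : EuclideanSpace ℝ (Fin n) =>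
        (a + b) * x i₀ + (∑ k, c k * (x k) ^ 2) + C₀) x
        ![EuclideanSpace.single i 1, EuclideanSpace.single j 1]
      = if i = j then 2 * c i else 0 := by
    intro x i j
    rw [iteratedFDeriv_two_apply, hfd2]
    simp only [Matrix.cons_val_zero, Matrix.cons_val_one, Matrix.head_cons]
    rw [hBapp]
    rw [Finset.sum_eq_single_of_mem i (Finset.mem_univ i)]
    · simp only [EuclideanSpace.single_apply]
      by_cases hij : i = j
      · simp [hij]
      · simp [hij, Ne.symm hij]
    · intro k _ hk
      simp [EuclideanSpace.single_apply, hk]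
  constructor
  · -- Pucci part
    intro x
    have hM : (Matrix.of fun i j : Fin n =>
        iteratedFDeriv ℝ 2 (fun x : EuclideanSpace ℝ (Fin n) =>
          (a + b) * x i₀ + (∑ k, c k * (x k) ^ 2) + C₀) x
          ![EuclideanSpace.single i 1, EuclideanSpace.single j 1])
        = Matrix.diagonal (fun i => if i = i₀ then -(4 * K / R ^ 2) else 4 / R ^ 2) := by
      ext i j
      rw [Matrix.of_apply, hiFD x i j, Matrix.diagonal_apply]
      by_cases hij : i = j
      · subst hij
        simp only [if_pos rfl, hc]
        by_cases hii : i = i₀ <;> simp [hii] <;> ring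
      · simp [hij]
    rw [hM]
    apply pucci_diag_nonneg n lam Lam (4 / R ^ 2) (4 * K / R ^ 2) (by positivity) (by positivity)
    have hKval : lam * (4 * K / R ^ 2) = Lam * (4 / R ^ 2) * (n : ℝ) := by
      rw [hK]; field_simp
    rw [hKval]
    have h4 : 0 ≤ Lam * (4 / R ^ 2) := by positivity
    nlinarith
  · -- boundary part
    intro hb4 x hx0 hxR
    have hfapp : ∀ i : Fin n,
        fderiv ℝ (fun x : EuclideanSpace ℝ (Fin n) =>
          (a + b) * x i₀ + (∑ k, c k * (x k) ^ 2) + C₀) x (EuclideanSpace.single i 1)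
        = (if i₀ = i then (a + b) else 0) + 2 * c i * x i := by
      intro i
      rw [hfderiv]
      simp only [ContinuousLinearMap.add_apply, ContinuousLinearMap.smul_apply,
        PiLp.proj_apply, smul_eq_mul]
      rw [hBapp]
      rw [Finset.sum_eq_single_of_mem i (Finset.mem_univ i)]
      · simp [EuclideanSpace.single_apply]
      · intro k _ hk
        simp [EuclideanSpace.single_apply, hk]
    have hLHS : fderiv ℝ (fun x : EuclideanSpace ℝ (Fin n) =>
        (a + b) * x i₀ + (∑ k, c k * (x k) ^ 2) + C₀) x (EuclideanSpace.single i₀ 1)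
        = a + b := by
      rw [hfapp i₀, hx0]
      simp
    rw [hLHS]
    have hterm : ∀ i ∈ Finset.univ.erase i₀,
        (fderiv ℝ (fun x : EuclideanSpace ℝ (Fin n) =>
          (a + b) * x i₀ + (∑ k, c k * (x k) ^ 2) + C₀) x (EuclideanSpace.single i 1)) ^ 2
        = (4 / R ^ 2) ^ 2 * (x i) ^ 2 := by
      intro i hi
      have hne : i ≠ i₀ := Finset.ne_of_mem_erase hi
      rw [hfapp i, if_neg (fun h => hne h.symm)]
      rw [hc]
      simp only [if_neg hne]
      ring
    rw [Finset.sum_congr rfl hterm, ← Finset.mul_sum]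
    -- bound the sum of squares
    have hnormsq : ∑ i, (x i) ^ 2 ≤ R ^ 2 := by
      have hne : ‖x‖ = Real.sqrt (∑ i, (x i) ^ 2) := by
        rw [EuclideanSpace.norm_eq]
        congr 1
        exact Finset.sum_congr rfl fun i _ => by rw [Real.norm_eq_abs, sq_abs]
      have hnn : (0:ℝ) ≤ ∑ i, (x i) ^ 2 := Finset.sum_nonneg fun i _ => sq_nonneg _
      have h1 : (∑ i, (x i) ^ 2) = ‖x‖ ^ 2 := by rw [hne, Real.sq_sqrt hnn]
      rw [h1]
      have := pow_le_pow_left₀ (norm_nonneg x) hxR 2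
      exact this
    have herase : ∑ i ∈ Finset.univ.erase i₀, (x i) ^ 2 ≤ R ^ 2 := by
      have : ∑ i ∈ Finset.univ.erase i₀, (x i) ^ 2 = ∑ i, (x i) ^ 2 := by
        rw [← Finset.add_sum_erase _ _ (Finset.mem_univ i₀), hx0]
        ring
      rw [this]; exact hnormsq
    have hsle : (4 / R ^ 2) ^ 2 * ∑ i ∈ Finset.univ.erase i₀, (x i) ^ 2 ≤ (4 / R) ^ 2 := by
      have h1 : (4 / R ^ 2) ^ 2 * ∑ i ∈ Finset.univ.erase i₀, (x i) ^ 2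
          ≤ (4 / R ^ 2) ^ 2 * R ^ 2 := by
        apply mul_le_mul_of_nonneg_left herase (by positivity)
      have h2 : (4 / R ^ 2) ^ 2 * R ^ 2 = (4 / R) ^ 2 := by field_simp
      linarith
    have hsqrt : Real.sqrt ((4 / R ^ 2) ^ 2 * ∑ i ∈ Finset.univ.erase i₀, (x i) ^ 2) ≤ 4 / R := by
      have := Real.sqrt_le_sqrt hsle
      rwa [Real.sqrt_sq (by positivity : (0:ℝ) ≤ 4 / R)] at this
    have : a + Real.sqrt ((4 / R ^ 2) ^ 2 * ∑ i ∈ Finset.univ.erase i₀, (x i) ^ 2) ≤ a + b := by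
      have : (4:ℝ) / R ≤ b := hb4
      linarith
    linarith [this]
end
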